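/- Let 1 < p < ∞, ω > 0 and ω_p = 4/((p-1)(p+3)). For every v ∈ H¹(ℝ) one has the quadratic-form lower bound ∫_ℝ (|v'(x)|² + ω|v(x)|² - p R_ω(x)^{p-1}|v(x)|²) dx ≥ -(ω/ω_p) ∫_ℝ |v(x)|² dx; i.e., the Schrödinger operator L_{ω,+,0} = -d²/dx² + ω - p R_ω^{p-1} is bounded below by -ω/ω_p. -/

import Mathlib

open MeasureTheory Real

noncomputable section

/-- The line soliton `R_ω(x) = ((p+1)ω/2)^{1/(p-1)} · sech^{2/(p-1)}((p-1)√ω·x/2)`. -/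
def Rsol (p ω : ℝ) (x : ℝ) : ℝ :=
  ((p + 1) * ω / 2) ^ (1 / (p - 1)) *
    Real.cosh ((p - 1) * Real.sqrt ω / 2 * x) ^ (-(2 / (p - 1)))

/-- The critical frequency `ω_p = 4/((p-1)(p+3))`. -/
def omegaCrit (p : ℝ) : ℝ := 4 / ((p - 1) * (p + 3))

/-- Membership in `H¹(ℝ)` for a real-valued function, formulated with the
classical derivative. -/
structure MemH1 (v : ℝ → ℝ) : Prop where
  diff : Differentiable ℝ v
  memL2 : MemLp v 2 volume
  deriv_memL2 : MemLp (deriv v) 2 volume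

/-- `R_ω^{p-1}` is an explicit multiple of `sech²`. -/
lemma Rsol_rpow (p ω : ℝ) (hp : 1 < p) (hω : 0 < ω) (x : ℝ) :
    Rsol p ω x ^ (p - 1)
      = (p + 1) * ω / 2 / Real.cosh ((p - 1) * Real.sqrt ω / 2 * x) ^ 2 := by
  have hA : (0:ℝ) < (p + 1) * ω / 2 := by nlinarith
  have hch : (0:ℝ) < Real.cosh ((p - 1) * Real.sqrt ω / 2 * x) := Real.cosh_pos _
  have hp1 : p - 1 ≠ 0 := sub_ne_zero.mpr (ne_of_gt hp)
  unfold Rsol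
  rw [Real.mul_rpow (Real.rpow_nonneg hA.le _) (Real.rpow_nonneg hch.le _),
    ← Real.rpow_mul hA.le, ← Real.rpow_mul hch.le,
    one_div_mul_cancel hp1, Real.rpow_one]
  have h2 : -(2 / (p - 1)) * (p - 1) = -2 := by field_simp
  rw [h2, show ((-2:ℝ)) = -((2:ℕ):ℝ) by norm_num, Real.rpow_neg hch.le, Real.rpow_natCast]
  ring

/-- The key algebraic (ground-state substitution) identity. -/
lemma key_algebra (p t C S u d : ℝ) (hC : C ≠ 0) (hss : C ^ 2 - S ^ 2 = 1) :
    d ^ 2 + t ^ 2 * u ^ 2 - p * ((p + 1) * t ^ 2 / 2 / C ^ 2) * u ^ 2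
        + t ^ 2 * ((p - 1) * (p + 3)) / 4 * u ^ 2
      = (d - -((p + 1) * t / 2) * (S / C) * u) ^ 2
        + (-((p + 1) * t / 2) * ((p - 1) * t / 2 / C ^ 2) * u ^ 2
            + -((p + 1) * t / 2) * (S / C) * (2 * u * d)) := by
  field_simp
  linear_combination (4 * t^2 * u^2 * (p+1)^2) * hss

/-- for every `v ∈ H¹(ℝ)`, the quadratic form of the Schrödinger operator
`L_{ω,+,0} = -d²/dx² + ω - p·R_ω^{p-1}` satisfies
`∫ (|v'|² + ω|v|² - p R_ω^{p-1}|v|²) ≥ -(ω/ω_p) ∫ |v|²`. -/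
theorem Lplus_lower_bound (p ω : ℝ) (hp : 1 < p) (hω : 0 < ω) :
    ∀ v : ℝ → ℝ, MemH1 v →
      ∫ x : ℝ, (deriv v x ^ 2 + ω * v x ^ 2 - p * Rsol p ω x ^ (p - 1) * v x ^ 2)
        ≥ -(ω / omegaCrit p) * ∫ x : ℝ, v x ^ 2 := by
  intro v hv
  obtain ⟨hvd, hv2, hv'2⟩ := hv
  have ht2 : Real.sqrt ω ^ 2 = ω := Real.sq_sqrt hω.le
  have ht0 : 0 < Real.sqrt ω := Real.sqrt_pos.mpr hω
  have hp1 : (0:ℝ) < p - 1 := by linarith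
  set t := Real.sqrt ω with ht
  set c : ℝ := ω / omegaCrit p with hc
  set k0 : ℝ := (p - 1) * t / 2 with hk0
  set b0 : ℝ := (p + 1) * t / 2 with hb0
  have hk0pos : 0 < k0 := by rw [hk0]; exact div_pos (mul_pos hp1 ht0) two_pos
  have hb0pos : 0 < b0 := by
    rw [hb0]; exact div_pos (mul_pos (by linarith) ht0) two_pos
  set ch : ℝ → ℝ := fun x => Real.cosh (k0 * x) with hch
  set sh : ℝ → ℝ := fun x => Real.sinh (k0 * x) with hsh
  have hchpos : ∀ x, 0 < ch x := fun x => Real.cosh_pos _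
  have hch1 : ∀ x, 1 ≤ ch x := fun x => Real.one_le_cosh _
  set W : ℝ → ℝ := fun x => -b0 * (sh x / ch x) with hW
  set W' : ℝ → ℝ := fun x => -b0 * (k0 / ch x ^ 2) with hW'
  set g : ℝ → ℝ := fun x => W x * v x ^ 2 with hg
  set g' : ℝ → ℝ := fun x => W' x * v x ^ 2 + W x * (2 * v x * deriv v x) with hg'
  set q : ℝ → ℝ := fun x => (deriv v x - W x * v x) ^ 2 with hq
  set F : ℝ → ℝ :=
    fun x => deriv v x ^ 2 + ω * v x ^ 2 - p * Rsol p ω x ^ (p - 1) * v x ^ 2 with hF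
  have hRpow : ∀ x, Rsol p ω x ^ (p - 1) = (p + 1) * ω / 2 / ch x ^ 2 := by
    intro x
    have h0 := Rsol_rpow p ω hp hω x
    simp only [hch]
    rw [hk0, ht]
    exact h0
  have hcval : c = t ^ 2 * ((p - 1) * (p + 3)) / 4 := by
    rw [hc]
    simp only [omegaCrit]
    rw [div_div_eq_mul_div, ← ht2]
  -- derivative of W
  have hWd : ∀ x, HasDerivAt W (W' x) x := by
    intro x
    have h1 : HasDerivAt (fun y : ℝ => k0 * y) k0 x := by
      simpa using (hasDerivAt_id x).const_mul k0
    have hsinh : HasDerivAt sh (Real.cosh (k0 * x) * k0) x := h1.sinh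
    have hcosh : HasDerivAt ch (Real.sinh (k0 * x) * k0) x := h1.cosh
    have hdiv : HasDerivAt (fun y => sh y / ch y)
        ((Real.cosh (k0 * x) * k0 * ch x - sh x * (Real.sinh (k0 * x) * k0)) / ch x ^ 2) x :=
      hsinh.div hcosh (hchpos x).ne'
    have h2 := hdiv.const_mul (-b0)
    have hnum : Real.cosh (k0 * x) * k0 * ch x - sh x * (Real.sinh (k0 * x) * k0) = k0 := by
      simp only [hch, hsh]
      linear_combination k0 * Real.cosh_sq_sub_sinh_sq (k0 * x)
    rw [hnum] at h2
    rw [hW, hW']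
    exact h2
  -- derivative of v^2
  have hv2d : ∀ x, HasDerivAt (fun y => v y ^ 2) (2 * v x * deriv v x) x := by
    intro x
    have h : HasDerivAt (fun y => v y ^ 2) (((2:ℕ):ℝ) * v x ^ (2 - 1) * deriv v x) x :=
      ((hvd x).hasDerivAt).pow 2
    convert h using 1
    push_cast
    ring
  -- derivative of g
  have hgd : ∀ x, HasDerivAt g (g' x) x := by
    intro x
    have h := (hWd x).mul (hv2d x)
    rw [hg, hg']
    exact h
  -- continuity
  have hcontch : Continuous ch := by
    rw [hch]; exact Real.continuous_cosh.comp (continuous_const.mul continuous_id)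
  have hcontsh : Continuous sh := by
    rw [hsh]; exact Real.continuous_sinh.comp (continuous_const.mul continuous_id)
  have hcontW : Continuous W := by
    rw [hW]
    exact continuous_const.mul (hcontsh.div hcontch fun x => (hchpos x).ne')
  have hcontW' : Continuous W' := by
    rw [hW']
    exact continuous_const.mul (continuous_const.div (hcontch.pow 2)
      fun x => pow_ne_zero 2 (hchpos x).ne')
  -- bounds
  have hWbdd : ∀ x, ‖W x‖ ≤ b0 := by
    intro x
    rw [hW]
    have h1 : |Real.sinh (k0 * x)| ≤ Real.cosh (k0 * x) := by
      rw [abs_le]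
      constructor
      · nlinarith [Real.cosh_add_sinh (k0 * x), Real.exp_pos (k0 * x)]
      · nlinarith [Real.cosh_sub_sinh (k0 * x), Real.exp_pos (-(k0 * x))]
    have h2 : |sh x / ch x| ≤ 1 := by
      simp only [hsh, hch]
      rw [abs_div, abs_of_pos (Real.cosh_pos (k0 * x))]
      exact div_le_one_of_le₀ h1 (Real.cosh_pos _).le
    calc ‖-b0 * (sh x / ch x)‖ = b0 * |sh x / ch x| := by
          rw [norm_mul, norm_neg, Real.norm_eq_abs, Real.norm_eq_abs, abs_of_pos hb0pos]
      _ ≤ b0 * 1 := mul_le_mul_of_nonneg_left h2 hb0pos.le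
      _ = b0 := mul_one b0
  have hW'bdd : ∀ x, ‖W' x‖ ≤ b0 * k0 := by
    intro x
    rw [hW']
    have h1 : k0 / ch x ^ 2 ≤ k0 := div_le_self hk0pos.le (by nlinarith [hch1 x])
    have h0 : 0 < k0 / ch x ^ 2 := div_pos hk0pos (by positivity)
    rw [norm_mul, norm_neg, Real.norm_eq_abs, Real.norm_eq_abs,
      abs_of_pos hb0pos, abs_of_pos h0]
    exact mul_le_mul_of_nonneg_left h1 hb0pos.le
  -- integrability
  have hI2 : Integrable (fun x => v x ^ 2) := hv2.integrable_sq
  have hI'2 : Integrable (fun x => deriv v x ^ 2) := hv'2.integrable_sq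
  have hIvv' : Integrable (fun x => v x * deriv v x) := by
    have hpqr : (1:ENNReal) / 1 = 1 / 2 + 1 / 2 := by
      norm_num
      exact ENNReal.inv_two_add_inv_two.symm
    have h : MemLp (v • deriv v) (1 : ENNReal) volume := MemLp.smul hv'2 hv2
    rw [memLp_one_iff_integrable] at h
    exact h
  have hIg : Integrable g := by
    rw [hg]
    exact hI2.bdd_mul hcontW.aestronglyMeasurable (Filter.Eventually.of_forall hWbdd)
  have hIg' : Integrable g' := by
    rw [hg']
    apply Integrable.add
    · exact hI2.bdd_mul hcontW'.aestronglyMeasurable (Filter.Eventually.of_forall hW'bdd)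
    · have h2 : Integrable (fun x => 2 * v x * deriv v x) := by
        have h3 := hIvv'.const_mul 2
        simpa [mul_assoc] using h3
      exact h2.bdd_mul hcontW.aestronglyMeasurable (Filter.Eventually.of_forall hWbdd)
  have hIpot : Integrable (fun x => p * Rsol p ω x ^ (p - 1) * v x ^ 2) := by
    have heq : (fun x => p * Rsol p ω x ^ (p - 1) * v x ^ 2)
        = fun x => (p * ((p + 1) * ω / 2 / ch x ^ 2)) * v x ^ 2 := by
      funext x; rw [hRpow x]
    rw [heq]
    apply hI2.bdd_mul (c := p * ((p + 1) * ω / 2))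
    · exact (continuous_const.mul (continuous_const.div (hcontch.pow 2)
        fun x => pow_ne_zero 2 (hchpos x).ne')).aestronglyMeasurable
    · refine Filter.Eventually.of_forall fun x => ?_
      have hA : (0:ℝ) < (p + 1) * ω / 2 := by nlinarith
      have h1 : (p + 1) * ω / 2 / ch x ^ 2 ≤ (p + 1) * ω / 2 :=
        div_le_self hA.le (by nlinarith [hch1 x])
      have h0 : 0 < (p + 1) * ω / 2 / ch x ^ 2 := div_pos hA (by positivity)
      rw [Real.norm_eq_abs, abs_of_pos (by positivity)]
      exact mul_le_mul_of_nonneg_left h1 (by linarith)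
  have hIF : Integrable F := by
    rw [hF]
    exact (hI'2.add (hI2.const_mul ω)).sub hIpot
  -- pointwise identity
  have hωt : ω = t ^ 2 := ht2.symm
  have hpoint : ∀ x, F x + c * v x ^ 2 = q x + g' x := by
    intro x
    simp only [hF, hq, hg', hW, hW']
    rw [hRpow x, hcval, hb0, hk0, hωt]
    exact key_algebra p t (ch x) (sh x) (v x) (deriv v x) (hchpos x).ne'
      (by simp only [hch, hsh]; exact Real.cosh_sq_sub_sinh_sq (k0 * x))
  -- conclusion
  have hiz : ∫ x, g' x = 0 := integral_eq_zero_of_hasDerivAt_of_integrable hgd hIg' hIg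
  have hIq : Integrable q := by
    have heq : q = fun x => (F x + c * v x ^ 2) - g' x := by
      funext x
      have h := hpoint x
      linarith
    rw [heq]
    exact (hIF.add (hI2.const_mul c)).sub hIg'
  have hkey : ∫ x, (F x + c * v x ^ 2) = (∫ x, q x) + ∫ x, g' x := by
    rw [← integral_add hIq hIg']
    exact integral_congr_ae (Filter.Eventually.of_forall fun x => hpoint x)
  have h2 : ∫ x, (F x + c * v x ^ 2) = (∫ x, F x) + c * ∫ x, v x ^ 2 := by
    rw [integral_add hIF (hI2.const_mul c), integral_const_mul]
  have h3 : 0 ≤ ∫ x, q x := by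
    apply integral_nonneg
    intro x
    simp only [hq]
    positivity
  have hgoal : (∫ x, F x) + c * ∫ x, v x ^ 2 ≥ 0 := by
    rw [← h2, hkey, hiz, add_zero]
    exact h3
  have hfin : (∫ x, F x) ≥ -c * ∫ x, v x ^ 2 := by linarith
  exact hfin
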